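/- Let Q_1, Q_2 be joint distributions on finite S × X with min_s Σ_x Q_1(s,x) > 0 and min_s Σ_x Q_2(s,x) > 0, and W a channel from X to finite Y. Then Sibson's mutual information of order ∞ satisfies |I_∞^S(P_{S_1,Y_1}) − I_∞^S(P_{S_2,Y_2})| ≤ 2 ‖Q_1 − Q_2‖_1 / min_s Σ_x Q_1(s,x), where I_∞^S(P_{U,V}) = log Σ_v max_u P_{V|U}(v|u). -/

import Mathlib

private lemma log_lip_aux {a b : ℝ} (ha : 1 ≤ a) (hb : 1 ≤ b) (h : b ≤ a) :
    Real.log a - Real.log b ≤ a - b := by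
  have ha0 : (0:ℝ) < a := lt_of_lt_of_le one_pos ha
  have hb0 : (0:ℝ) < b := lt_of_lt_of_le one_pos hb
  have h1 := Real.log_le_sub_one_of_pos (show (0:ℝ) < a / b by positivity)
  rw [Real.log_div (ne_of_gt ha0) (ne_of_gt hb0)] at h1
  have h2 : a / b - 1 = (a - b) / b := by field_simp
  have h3 : (a - b) / b ≤ a - b := div_le_self (by linarith) hb
  linarith

private lemma log_lip {a b : ℝ} (ha : 1 ≤ a) (hb : 1 ≤ b) :
    |Real.log a - Real.log b| ≤ |a - b| := by
  rcases le_total b a with h | h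
  · rw [abs_of_nonneg (by linarith : (0:ℝ) ≤ a - b)]
    rw [abs_of_nonneg (sub_nonneg.2 (Real.log_le_log (by linarith) h))]
    exact log_lip_aux ha hb h
  · rw [abs_sub_comm, abs_sub_comm a b]
    rw [abs_of_nonneg (by linarith : (0:ℝ) ≤ b - a)]
    rw [abs_of_nonneg (sub_nonneg.2 (Real.log_le_log (by linarith) h))]
    exact log_lip_aux hb ha h

private lemma sup'_abs_le {S : Type*} [Fintype S] [Nonempty S] (f g : S → ℝ) :
    |Finset.univ.sup' Finset.univ_nonempty f - Finset.univ.sup' Finset.univ_nonempty g|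
      ≤ ∑ s, |f s - g s| := by
  have key : ∀ (f g : S → ℝ), Finset.univ.sup' Finset.univ_nonempty f -
      Finset.univ.sup' Finset.univ_nonempty g ≤ ∑ s, |f s - g s| := by
    intro f g
    rw [sub_le_iff_le_add]
    apply Finset.sup'_le
    intro s _
    have h1 : |f s - g s| ≤ ∑ t, |f t - g t| :=
      Finset.single_le_sum (f := fun t => |f t - g t|) (fun i _ => abs_nonneg _) (Finset.mem_univ s)
    have h2 : g s ≤ Finset.univ.sup' Finset.univ_nonempty g :=
      Finset.le_sup' _ (Finset.mem_univ s)
    have h3 : f s - g s ≤ |f s - g s| := le_abs_self _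
    linarith
  rw [abs_sub_le_iff]
  refine ⟨key f g, ?_⟩
  have := key g f
  simpa [abs_sub_comm] using this

private lemma per_row {Y : Type*} [Fintype Y] (R₁ R₂ : Y → ℝ) (q₁ q₂ d : ℝ)
    (hq₁ : 0 < q₁) (hq₂ : 0 < q₂)
    (hR₂0 : ∀ y, 0 ≤ R₂ y)
    (hR₂sum : ∑ y, R₂ y = q₂)
    (hRd : ∑ y, |R₁ y - R₂ y| ≤ d)
    (hqd : |q₁ - q₂| ≤ d) :
    ∑ y, |R₁ y / q₁ - R₂ y / q₂| ≤ 2 * d / q₁ := by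
  have key : ∀ y, |R₁ y / q₁ - R₂ y / q₂| ≤
      |R₁ y - R₂ y| / q₁ + R₂ y * |q₂ - q₁| / (q₁ * q₂) := by
    intro y
    have heq : R₁ y / q₁ - R₂ y / q₂ =
        (R₁ y - R₂ y) / q₁ + R₂ y * (q₂ - q₁) / (q₁ * q₂) := by
      field_simp; ring
    rw [heq]
    refine (abs_add_le _ _).trans ?_
    rw [abs_div, abs_of_pos hq₁, abs_div, abs_of_pos (mul_pos hq₁ hq₂), abs_mul,
      abs_of_nonneg (hR₂0 y)]
  calc ∑ y, |R₁ y / q₁ - R₂ y / q₂|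
      ≤ ∑ y, (|R₁ y - R₂ y| / q₁ + R₂ y * |q₂ - q₁| / (q₁ * q₂)) :=
        Finset.sum_le_sum fun y _ => key y
    _ = (∑ y, |R₁ y - R₂ y|) / q₁ + (∑ y, R₂ y) * |q₂ - q₁| / (q₁ * q₂) := by
        rw [Finset.sum_add_distrib, ← Finset.sum_div, ← Finset.sum_div, ← Finset.sum_mul]
    _ = (∑ y, |R₁ y - R₂ y|) / q₁ + |q₂ - q₁| / q₁ := by
        rw [hR₂sum]; field_simp
    _ ≤ d / q₁ + d / q₁ := by
        gcongr
        rw [abs_sub_comm] at hqd; exact hqd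
    _ = 2 * d / q₁ := by ring

theorem stmt_12 {S X Y : Type*} [Fintype S] [Fintype X] [Fintype Y] [Nonempty S]
    (Q₁ Q₂ : S → X → ℝ) (W : X → Y → ℝ)
    (hQ₁0 : ∀ s x, 0 ≤ Q₁ s x) (hQ₁1 : ∑ s, ∑ x, Q₁ s x = 1)
    (hQ₂0 : ∀ s x, 0 ≤ Q₂ s x) (hQ₂1 : ∑ s, ∑ x, Q₂ s x = 1)
    (hW0 : ∀ x y, 0 ≤ W x y) (hW1 : ∀ x, ∑ y, W x y = 1)
    (hm₁ : ∀ s, 0 < ∑ x, Q₁ s x) (hm₂ : ∀ s, 0 < ∑ x, Q₂ s x) :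
    |Real.log (∑ y, Finset.univ.sup' Finset.univ_nonempty
        (fun s => (∑ x, Q₁ s x * W x y) / (∑ x, Q₁ s x))) -
     Real.log (∑ y, Finset.univ.sup' Finset.univ_nonempty
        (fun s => (∑ x, Q₂ s x * W x y) / (∑ x, Q₂ s x)))| ≤
      2 * (∑ s, ∑ x, |Q₁ s x - Q₂ s x|) /
        Finset.univ.inf' Finset.univ_nonempty (fun s => ∑ x, Q₁ s x) := by
  set q₁ : S → ℝ := fun s => ∑ x, Q₁ s x with hq₁def
  set q₂ : S → ℝ := fun s => ∑ x, Q₂ s x with hq₂def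
  set R₁ : S → Y → ℝ := fun s y => ∑ x, Q₁ s x * W x y with hR₁def
  set R₂ : S → Y → ℝ := fun s y => ∑ x, Q₂ s x * W x y with hR₂def
  set d : S → ℝ := fun s => ∑ x, |Q₁ s x - Q₂ s x| with hddef
  set m : ℝ := Finset.univ.inf' Finset.univ_nonempty q₁ with hmdef
  set T₁ : ℝ := ∑ y, Finset.univ.sup' Finset.univ_nonempty (fun s => R₁ s y / q₁ s) with hT₁
  set T₂ : ℝ := ∑ y, Finset.univ.sup' Finset.univ_nonempty (fun s => R₂ s y / q₂ s) with hT₂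
  have hm0 : 0 < m := by
    rw [hmdef, Finset.lt_inf'_iff]
    exact fun s _ => hm₁ s
  -- row sums of R
  have hRsum : ∀ (Q : S → X → ℝ) (s : S), (∑ y, ∑ x, Q s x * W x y) = ∑ x, Q s x := by
    intro Q s
    rw [Finset.sum_comm]
    simp_rw [← Finset.mul_sum, hW1, mul_one]
  -- T ≥ 1
  have hT_ge : ∀ (R : S → Y → ℝ) (q : S → ℝ),
      (∀ s, 0 < q s) → (∀ s, ∑ y, R s y = q s) →
      (1:ℝ) ≤ ∑ y, Finset.univ.sup' Finset.univ_nonempty (fun s => R s y / q s) := by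
    intro R q hq hsum
    obtain ⟨s₀⟩ := ‹Nonempty S›
    have h1 : ∑ y, R s₀ y / q s₀ = 1 := by
      rw [← Finset.sum_div, hsum, div_self (ne_of_gt (hq s₀))]
    calc (1:ℝ) = ∑ y, R s₀ y / q s₀ := h1.symm
      _ ≤ ∑ y, Finset.univ.sup' Finset.univ_nonempty (fun s => R s y / q s) :=
        Finset.sum_le_sum fun y _ => Finset.le_sup' (fun s => R s y / q s) (Finset.mem_univ s₀)
  have hR₁sum : ∀ s, ∑ y, R₁ s y = q₁ s := fun s => hRsum Q₁ s
  have hR₂sum : ∀ s, ∑ y, R₂ s y = q₂ s := fun s => hRsum Q₂ s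
  have hT₁ge : (1:ℝ) ≤ T₁ := hT_ge R₁ q₁ hm₁ hR₁sum
  have hT₂ge : (1:ℝ) ≤ T₂ := hT_ge R₂ q₂ hm₂ hR₂sum
  -- per-s bounds
  have hRd : ∀ s, ∑ y, |R₁ s y - R₂ s y| ≤ d s := by
    intro s
    calc ∑ y, |R₁ s y - R₂ s y|
        ≤ ∑ y, ∑ x, |Q₁ s x - Q₂ s x| * W x y := by
          apply Finset.sum_le_sum
          intro y _
          rw [hR₁def, hR₂def]
          simp only
          rw [← Finset.sum_sub_distrib]
          refine (Finset.abs_sum_le_sum_abs _ _).trans ?_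
          apply Finset.sum_le_sum
          intro x _
          rw [← sub_mul, abs_mul, abs_of_nonneg (hW0 x y)]
      _ = d s := by
          rw [Finset.sum_comm]
          simp_rw [← Finset.mul_sum, hW1, mul_one]
          rfl
  have hqd : ∀ s, |q₁ s - q₂ s| ≤ d s := by
    intro s
    rw [hq₁def, hq₂def, hddef]
    simp only
    rw [← Finset.sum_sub_distrib]
    exact Finset.abs_sum_le_sum_abs _ _
  have hrow : ∀ s, ∑ y, |R₁ s y / q₁ s - R₂ s y / q₂ s| ≤ 2 * d s / q₁ s := by
    intro s
    exact per_row (R₁ s) (R₂ s) (q₁ s) (q₂ s) (d s) (hm₁ s) (hm₂ s)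
      (fun y => Finset.sum_nonneg fun x _ => mul_nonneg (hQ₂0 s x) (hW0 x y))
      (hR₂sum s) (hRd s) (hqd s)
  -- main chain
  have hmain : |T₁ - T₂| ≤ 2 * (∑ s, d s) / m := by
    calc |T₁ - T₂|
        ≤ ∑ y, |Finset.univ.sup' Finset.univ_nonempty (fun s => R₁ s y / q₁ s) -
            Finset.univ.sup' Finset.univ_nonempty (fun s => R₂ s y / q₂ s)| := by
          rw [hT₁, hT₂, ← Finset.sum_sub_distrib]
          exact Finset.abs_sum_le_sum_abs _ _
      _ ≤ ∑ y, ∑ s, |R₁ s y / q₁ s - R₂ s y / q₂ s| :=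
          Finset.sum_le_sum fun y _ => sup'_abs_le _ _
      _ = ∑ s, ∑ y, |R₁ s y / q₁ s - R₂ s y / q₂ s| := by rw [Finset.sum_comm]
      _ ≤ ∑ s, 2 * d s / q₁ s := Finset.sum_le_sum fun s _ => hrow s
      _ ≤ ∑ s, 2 * d s / m := by
          apply Finset.sum_le_sum
          intro s _
          have hd0 : 0 ≤ d s := Finset.sum_nonneg fun x _ => abs_nonneg _
          have hms : m ≤ q₁ s := Finset.inf'_le _ (Finset.mem_univ s)
          gcongr
      _ = 2 * (∑ s, d s) / m := by
          rw [← Finset.sum_div, ← Finset.mul_sum]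
  exact (log_lip hT₁ge hT₂ge).trans hmain
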